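/- For all rational numbers x and y, x < y if and only if there exist rational numbers t, u, v, w such that x ≠ y and x + t² + u² + v² + w² = y. -/

import Mathlib

/-- Definability of the order in `⟨ℚ; +, ×⟩` via four squares. -/
theorem rat_lt_iff_four_squares (x y : ℚ) :
    x < y ↔ ∃ t u v w : ℚ, x ≠ y ∧ x + t ^ 2 + u ^ 2 + v ^ 2 + w ^ 2 = y := by
  constructor
  · intro hxy
    set d : ℚ := y - x with hd
    have hdpos : 0 < d := by simp [hd]; linarith
    have hnum : 0 < d.num := Rat.num_pos.mpr hdpos
    set n : ℕ := d.num.toNat * d.den with hn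
    obtain ⟨a, b, c, e, habce⟩ := Nat.sum_four_squares n
    refine ⟨a / d.den, b / d.den, c / d.den, e / d.den, ne_of_lt hxy, ?_⟩
    have hden : (d.den : ℚ) ≠ 0 := by exact_mod_cast d.den_ne_zero
    have hnq : (n : ℚ) = d * (d.den : ℚ) ^ 2 := by
      have : (d.num : ℚ) = d * d.den := by
        exact (Rat.mul_den_eq_num d).symm
      have h2 : ((d.num.toNat : ℕ) : ℚ) = (d.num : ℚ) := by
        exact_mod_cast Int.toNat_of_nonneg hnum.le
      rw [hn]; push_cast; rw [h2, this]; ring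
    have : ((a:ℚ)^2 + b^2 + c^2 + e^2) = d * (d.den : ℚ)^2 := by
      rw [← hnq, ← habce]; push_cast; ring
    field_simp
    nlinarith [this]
  · rintro ⟨t, u, v, w, hne, heq⟩
    have := sq_nonneg t
    have := sq_nonneg u
    have := sq_nonneg v
    have := sq_nonneg w
    rcases lt_or_eq_of_le (show x ≤ y by nlinarith) with h | h
    · exact h
    · exact absurd h hne
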